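/- Let i and j be nonnegative integers with i ≤ 2j and j ≤ i (equivalently i/2 ≤ j ≤ i), so that λ = iα1 + jα2 = (2i − 2j)ω1 + (−i + 2j)ω2 is a dominant weight lying in the root lattice. Then N(2i − 2j, −i + 2j, i, j) = i/2 − i² + 3ij − 2j² + (3 + (−1)^i)/4; that is, the multiplicity of the weight 0 in the irreducible so_5(C)-module of highest weight λ equals this expression. -/

import Mathlib

/-- The summand: number of valid `y` values for a given `z`. -/
def Fn (p m z : ℤ) : ℤ :=
  ((min (2*p+m) (min (2*p+2*m-2*z) (2*p+2*z)) + 1 - max (2*z) (p+z)).toNat : ℤ)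

lemma icc_insert (a b : ℤ) (h : a ≤ b + 1) :
    Finset.Icc a (b+1) = insert (b+1) (Finset.Icc a b) := by
  ext x; simp only [Finset.mem_Icc, Finset.mem_insert]; omega

lemma sum_lin (c d a b : ℤ) (hb : a - 1 ≤ b) :
    2 * ∑ z ∈ Finset.Icc a b, (c + d * z) = (b + 1 - a) * (2*c + d*(a+b)) := by
  refine Int.le_induction (motive := fun b _ => 2 * ∑ z ∈ Finset.Icc a b, (c + d * z) = (b + 1 - a) * (2*c + d*(a+b))) ?_ ?_ b hb
  · show 2 * ∑ z ∈ Finset.Icc a (a-1), (c + d * z) = (a - 1 + 1 - a) * (2*c + d*(a+(a-1)))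
    rw [Finset.Icc_eq_empty (by omega), Finset.sum_empty]; ring
  · intro n hn ih
    show 2 * ∑ z ∈ Finset.Icc a (n+1), (c + d * z) = (n + 1 + 1 - a) * (2*c + d*(a+(n+1)))
    rw [icc_insert a n (by omega),
      Finset.sum_insert (by simp only [Finset.mem_Icc]; omega)]
    linear_combination ih

lemma sum_split (f : ℤ → ℤ) (a b c : ℤ) (h1 : a ≤ b+1) (h2 : b ≤ c) :
    ∑ z ∈ Finset.Icc a c, f z
      = ∑ z ∈ Finset.Icc a b, f z + ∑ z ∈ Finset.Icc (b+1) c, f z := by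
  rw [← Finset.sum_union (by
    rw [Finset.disjoint_left]; intro x hx hx'
    simp only [Finset.mem_Icc] at hx hx'; omega)]
  congr 1
  ext x; simp only [Finset.mem_Icc, Finset.mem_union]; omega

lemma sum_eq_lin (a b c d : ℤ) (f : ℤ → ℤ)
    (hf : ∀ z, a ≤ z → z ≤ b → f z = c + d*z) (hb : a - 1 ≤ b) :
    2 * ∑ z ∈ Finset.Icc a b, f z = (b+1-a)*(2*c+d*(a+b)) := by
  have hcongr : ∑ z ∈ Finset.Icc a b, f z = ∑ z ∈ Finset.Icc a b, (c + d*z) :=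
    Finset.sum_congr rfl (fun z hz => by
      rw [Finset.mem_Icc] at hz; exact hf z hz.1 hz.2)
  rw [hcongr]
  exact sum_lin c d a b hb

lemma sumB (p m : ℤ) (hp : 0 ≤ p) (hm : 0 ≤ m) :
    ∑ z ∈ Finset.Icc 0 m, Fn p m z = p*m + p + m/2 + 1 := by
  obtain ⟨h, e, hh0, he0, he1, hme⟩ :
      ∃ h e, 0 ≤ h ∧ 0 ≤ e ∧ e ≤ 1 ∧ m = 2*h+e :=
    ⟨m/2, m%2, by omega, by omega, by omega, by omega⟩
  obtain ⟨q, d, hq0, hd0, hd1, hqd⟩ :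
      ∃ q d, 0 ≤ q ∧ 0 ≤ d ∧ d ≤ 1 ∧ p + m = 2*q+d :=
    ⟨(p+m)/2, (p+m)%2, by omega, by omega, by omega, by omega⟩
  have hdiv : m / 2 = h := by omega
  rw [hdiv]
  have key : 2 * ∑ z ∈ Finset.Icc 0 m, Fn p m z = 2*(p*m + p + h + 1) := by
    rcases le_or_gt m p with hI | hmp
    · -- Case I : m ≤ p
      rw [sum_split (fun z => Fn p m z) 0 h m (by omega) (by omega), mul_add,
        sum_eq_lin 0 h (p+1) 1 (fun z => Fn p m z)
          (fun z hz1 hz2 => by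
            unfold Fn; simp only [min_def, max_def]; split_ifs <;> omega) (by omega),
        sum_eq_lin (h+1) m (p+2*m+1) (-3) (fun z => Fn p m z)
          (fun z hz1 hz2 => by
            unfold Fn; simp only [min_def, max_def]; split_ifs <;> omega) (by omega)]
      subst hme
      rcases (show e = 0 ∨ e = 1 by omega) with rfl | rfl <;> ring
    · rcases le_or_gt p h with hph | hhp
      · -- Case II : p < m, p ≤ h;  blocks [0,p],[p+1,h],[h+1,q],[q+1,m]
        rw [sum_split (fun z => Fn p m z) 0 p m (by omega) (by omega),
          sum_split (fun z => Fn p m z) (p+1) h m (by omega) (by omega),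
          sum_split (fun z => Fn p m z) (h+1) q m (by omega) (by omega),
          mul_add, mul_add, mul_add,
          sum_eq_lin 0 p (p+1) 1 (fun z => Fn p m z)
            (fun z hz1 hz2 => by
              unfold Fn; simp only [min_def, max_def]; split_ifs <;> omega) (by omega),
          sum_eq_lin (p+1) h (2*p+1) 0 (fun z => Fn p m z)
            (fun z hz1 hz2 => by
              unfold Fn; simp only [min_def, max_def]; split_ifs <;> omega) (by omega),
          sum_eq_lin (h+1) q (2*p+2*m+1) (-4) (fun z => Fn p m z)
            (fun z hz1 hz2 => by
              unfold Fn; simp only [min_def, max_def]; split_ifs <;> omega) (by omega),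
          sum_eq_lin (q+1) m 0 0 (fun z => Fn p m z)
            (fun z hz1 hz2 => by
              unfold Fn; simp only [min_def, max_def]; split_ifs <;> omega) (by omega)]
        subst hme
        obtain rfl : p = 2*q+d-2*h-e := by omega
        rcases (show e = 0 ∨ e = 1 by omega) with rfl | rfl <;>
          rcases (show d = 0 ∨ d = 1 by omega) with rfl | rfl <;> ring
      · -- Case III : h < p < m; blocks [0,h],[h+1,p],[p+1,q],[q+1,m]
        rw [sum_split (fun z => Fn p m z) 0 h m (by omega) (by omega),
          sum_split (fun z => Fn p m z) (h+1) p m (by omega) (by omega),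
          sum_split (fun z => Fn p m z) (p+1) q m (by omega) (by omega),
          mul_add, mul_add, mul_add,
          sum_eq_lin 0 h (p+1) 1 (fun z => Fn p m z)
            (fun z hz1 hz2 => by
              unfold Fn; simp only [min_def, max_def]; split_ifs <;> omega) (by omega),
          sum_eq_lin (h+1) p (p+2*m+1) (-3) (fun z => Fn p m z)
            (fun z hz1 hz2 => by
              unfold Fn; simp only [min_def, max_def]; split_ifs <;> omega) (by omega),
          sum_eq_lin (p+1) q (2*p+2*m+1) (-4) (fun z => Fn p m z)
            (fun z hz1 hz2 => by
              unfold Fn; simp only [min_def, max_def]; split_ifs <;> omega) (by omega),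
          sum_eq_lin (q+1) m 0 0 (fun z => Fn p m z)
            (fun z hz1 hz2 => by
              unfold Fn; simp only [min_def, max_def]; split_ifs <;> omega) (by omega)]
        subst hme
        obtain rfl : p = 2*q+d-2*h-e := by omega
        rcases (show e = 0 ∨ e = 1 by omega) with rfl | rfl <;>
          rcases (show d = 0 ∨ d = 1 by omega) with rfl | rfl <;> ring
  linarith [key]

/-- The number of quadruples `(a22, a11, a12, a13)` of nonnegative integers satisfying
Littelmann's inequalities for `so₅(ℂ)` together with the weight equations
`a22 + a12 = β1` and `a11 + a13 = β2`.  By Littelmann's results this is the dimension of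
the weight space of weight `λ1·ω1 + λ2·ω2 − β1·α1 − β2·α2` in the irreducible
`so₅(ℂ)`-module of highest weight `λ1·ω1 + λ2·ω2`. -/
noncomputable def weightMult (l1 l2 b1 b2 : ℤ) : ℕ :=
  Set.ncard {a : ℤ × ℤ × ℤ × ℤ |
    0 ≤ a.1 ∧ 0 ≤ a.2.1 ∧ 0 ≤ a.2.2.1 ∧ 0 ≤ a.2.2.2 ∧
    2 * a.2.1 ≥ a.2.2.1 ∧
    a.2.2.1 ≥ 2 * a.2.2.2 ∧
    a.2.2.2 ≤ l2 ∧
    a.2.2.1 ≤ l1 + 2 * a.2.2.2 ∧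
    a.2.1 ≤ l2 + a.2.2.1 - 2 * a.2.2.2 ∧
    a.1 ≤ l1 + 2 * a.2.1 - 2 * a.2.2.1 + 2 * a.2.2.2 ∧
    a.1 + a.2.2.1 = b1 ∧
    a.2.1 + a.2.2.2 = b2}

lemma countA (i j : ℤ) (hi : 0 ≤ i) (hj : 0 ≤ j) (h1 : i ≤ 2 * j) (h2 : j ≤ i) :
    ((weightMult (2 * i - 2 * j) (-i + 2 * j) i j : ℕ) : ℤ)
      = ∑ z ∈ Finset.Icc 0 (2*j-i), Fn (i-j) (2*j-i) z := by
  classical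
  set F : Finset (ℤ × ℤ × ℤ × ℤ) :=
    (Finset.Icc (0:ℤ) i ×ˢ Finset.Icc (0:ℤ) j ×ˢ Finset.Icc (0:ℤ) i ×ˢ
      Finset.Icc (0:ℤ) j).filter (fun a =>
      0 ≤ a.1 ∧ 0 ≤ a.2.1 ∧ 0 ≤ a.2.2.1 ∧ 0 ≤ a.2.2.2 ∧
      2 * a.2.1 ≥ a.2.2.1 ∧
      a.2.2.1 ≥ 2 * a.2.2.2 ∧
      a.2.2.2 ≤ -i + 2 * j ∧
      a.2.2.1 ≤ 2 * i - 2 * j + 2 * a.2.2.2 ∧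
      a.2.1 ≤ -i + 2 * j + a.2.2.1 - 2 * a.2.2.2 ∧
      a.1 ≤ 2 * i - 2 * j + 2 * a.2.1 - 2 * a.2.2.1 + 2 * a.2.2.2 ∧
      a.1 + a.2.2.1 = i ∧
      a.2.1 + a.2.2.2 = j) with hF
  have hset : {a : ℤ × ℤ × ℤ × ℤ |
      0 ≤ a.1 ∧ 0 ≤ a.2.1 ∧ 0 ≤ a.2.2.1 ∧ 0 ≤ a.2.2.2 ∧
      2 * a.2.1 ≥ a.2.2.1 ∧
      a.2.2.1 ≥ 2 * a.2.2.2 ∧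
      a.2.2.2 ≤ -i + 2 * j ∧
      a.2.2.1 ≤ 2 * i - 2 * j + 2 * a.2.2.2 ∧
      a.2.1 ≤ -i + 2 * j + a.2.2.1 - 2 * a.2.2.2 ∧
      a.1 ≤ 2 * i - 2 * j + 2 * a.2.1 - 2 * a.2.2.1 + 2 * a.2.2.2 ∧
      a.1 + a.2.2.1 = i ∧
      a.2.1 + a.2.2.2 = j} = ↑F := by
    ext ⟨w, x, y, z⟩
    simp only [hF, Set.mem_setOf_eq, Finset.coe_filter, Finset.mem_product,
      Finset.mem_Icc]
    constructor
    · intro hh; exact ⟨by omega, by omega⟩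
    · intro hh; omega
  have hcard : F.card = ∑ z ∈ Finset.Icc (0:ℤ) (2*j-i),
      ((min i (min (2*j-2*z) (2*i-2*j+2*z)) + 1 - max (2*z) (i-j+z)).toNat) := by
    rw [Finset.card_eq_sum_card_fiberwise
      (s := F) (f := fun a : ℤ × ℤ × ℤ × ℤ => a.2.2.2) (t := Finset.Icc 0 (2*j-i))
      (fun a ha => by
        simp only [hF, Finset.mem_coe, Finset.mem_filter, Finset.mem_product, Finset.mem_Icc] at ha
        simp only [Finset.mem_coe, Finset.mem_Icc]; omega)]
    refine Finset.sum_congr rfl fun z hz => ?_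
    rw [Finset.mem_Icc] at hz
    have himg : Finset.filter (fun a : ℤ × ℤ × ℤ × ℤ => a.2.2.2 = z) F
        = (Finset.Icc (max (2*z) (i-j+z))
            (min i (min (2*j-2*z) (2*i-2*j+2*z)))).image
              (fun y => (i - y, j - z, y, z)) := by
      ext ⟨w, x, y, z'⟩
      simp only [hF, Finset.mem_filter, Finset.mem_product, Finset.mem_Icc,
        Finset.mem_image, Prod.mk.injEq]
      constructor
      · rintro ⟨⟨hbox, hcon⟩, hz'⟩
        exact ⟨y, by omega, by omega, by omega, by omega, by omega⟩
      · rintro ⟨y1, hy1, hw, hx, hy, hz'⟩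
        subst hw; subst hx; subst hy; subst hz'
        refine ⟨⟨?_, ?_⟩, rfl⟩ <;> omega
    rw [himg, Finset.card_image_of_injective _
      (fun y1 y2 hy => by simpa using congrArg (fun a : ℤ × ℤ × ℤ × ℤ => a.2.2.1) hy),
      Int.card_Icc]
  unfold weightMult
  rw [hset, Set.ncard_coe_finset, hcard]
  push_cast
  refine Finset.sum_congr rfl fun z hz => ?_
  rw [Finset.mem_Icc] at hz
  unfold Fn
  simp only [min_def, max_def]
  split_ifs <;> omega

/-- The multiplicity of the weight `0` in the irreducible `so₅(ℂ)`-module of highest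
weight `λ = i·α1 + j·α2 = (2i − 2j)·ω1 + (−i + 2j)·ω2` (which is dominant precisely
when `i/2 ≤ j ≤ i`). -/
theorem zero_weight_multiplicity (i j : ℤ)
    (hi : 0 ≤ i) (hj : 0 ≤ j) (h1 : i ≤ 2 * j) (h2 : j ≤ i) :
    (weightMult (2 * i - 2 * j) (-i + 2 * j) i j : ℚ) =
      i / 2 - i ^ 2 + 3 * i * j - 2 * j ^ 2 + (3 + (-1 : ℚ) ^ i) / 4 := by
  have hN : ((weightMult (2 * i - 2 * j) (-i + 2 * j) i j : ℕ) : ℤ)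
      = (i-j)*(2*j-i) + (i-j) + (2*j-i)/2 + 1 :=
    (countA i j hi hj h1 h2).trans (sumB (i-j) (2*j-i) (by omega) (by omega))
  rcases Int.even_or_odd i with ⟨k, hk⟩ | ⟨k, hk⟩
  · rw [show (2*j-i)/2 = j - k by omega] at hN
    have hpow : (-1 : ℚ) ^ i = 1 := by
      rw [hk, show k + k = 2*k by ring, zpow_mul]; norm_num
    rw [hpow]
    have : ((weightMult (2 * i - 2 * j) (-i + 2 * j) i j : ℕ) : ℚ)
        = (((i-j)*(2*j-i) + (i-j) + (j-k) + 1 : ℤ) : ℚ) := by exact_mod_cast hN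
    rw [this]
    have hik : (i : ℚ) = 2 * k := by exact_mod_cast congrArg (Int.cast : ℤ → ℚ) (by omega : i = 2*k)
    push_cast
    rw [hik]
    ring
  · rw [show (2*j-i)/2 = j - k - 1 by omega] at hN
    have hpow : (-1 : ℚ) ^ i = -1 := by
      rw [hk, zpow_add₀ (by norm_num : (-1:ℚ) ≠ 0), zpow_mul]; norm_num
    rw [hpow]
    have : ((weightMult (2 * i - 2 * j) (-i + 2 * j) i j : ℕ) : ℚ)
        = (((i-j)*(2*j-i) + (i-j) + (j-k-1) + 1 : ℤ) : ℚ) := by exact_mod_cast hN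
    rw [this]
    have hik : (i : ℚ) = 2 * k + 1 := by exact_mod_cast congrArg (Int.cast : ℤ → ℚ) hk
    push_cast
    rw [hik]
    ring
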